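/- Let u^n, u^{n+1} ∈ X_N (trigonometric polynomials of degree ≤ N with mean zero) satisfy (u^{n+1} - u^n)/τ = -νΔ²u^{n+1} + ΔΠ_N(f(u^n)) with f(u) = u³ - u, τ, ν > 0. Then ℰ(u^{n+1}) - ℰ(u^n) + (1/2 + √(2ν/τ)) ‖u^{n+1} - u^n‖₂² ≤ (3/2) max{‖u^n‖_∞², ‖u^{n+1}‖_∞²} · ‖u^{n+1} - u^n‖₂², where ℰ(u) = ∫ ( (ν/2)|∇u|² + (1/4)(u²-1)² ) dx. -/

import Mathlib

open MeasureTheory Real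

/-- Fundamental domain `[-1/2,1/2]^d` of the unit torus `𝕋^d`. -/
noncomputable def cube (d : ℕ) : Set (Fin d → ℝ) :=
  Set.univ.pi fun _ => Set.Icc (-(1 : ℝ) / 2) ((1 : ℝ) / 2)

/-- Euclidean norm of a lattice frequency `k ∈ ℤ^d`. -/
noncomputable def knorm {d : ℕ} (k : Fin d → ℤ) : ℝ :=
  Real.sqrt (∑ j, ((k j : ℝ)) ^ 2)

/-- The character `e^{2πik·x}`. -/
noncomputable def eK {d : ℕ} (k : Fin d → ℤ) (x : Fin d → ℝ) : ℂ :=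
  Complex.exp (2 * π * Complex.I * ((∑ j, (k j : ℝ) * x j : ℝ) : ℂ))

/-- The (real-valued) trigonometric polynomial with Fourier coefficients `a`. -/
noncomputable def fSum {d : ℕ} (a : (Fin d → ℤ) → ℂ) (x : Fin d → ℝ) : ℝ :=
  (∑' k : Fin d → ℤ, a k * eK k x).re

/-- The Ginzburg–Landau energy `ℰ(u) = ∫ (ν/2)|∇u|² + (1/4)(u²-1)²`, with the gradient
term expressed via Plancherel through the Fourier coefficients `a` of `u`. -/
noncomputable def energy (d : ℕ) (ν : ℝ) (a : (Fin d → ℤ) → ℂ) : ℝ :=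
  ν / 2 * ∑' k : Fin d → ℤ, (2 * π * knorm k) ^ 2 * ‖a k‖ ^ 2 +
    1 / 4 * ∫ x in cube d, ((fSum a x) ^ 2 - 1) ^ 2

-- 1D building block
lemma myint1d (m : ℤ) :
    (∫ t in Set.Icc (-(1:ℝ)/2) ((1:ℝ)/2), Complex.exp (2 * π * Complex.I * m * t)) =
      if m = 0 then 1 else 0 := by
  rw [MeasureTheory.integral_Icc_eq_integral_Ioc,
    ← intervalIntegral.integral_of_le (by norm_num : (-(1:ℝ)/2) ≤ (1:ℝ)/2)]
  by_cases hm : m = 0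
  · simp [hm]; norm_num
  · rw [if_neg hm]
    have hc : (2 * π * Complex.I * m) ≠ 0 := by
      simp [Real.pi_ne_zero, Complex.I_ne_zero, Complex.ofReal_ne_zero, hm]
    rw [integral_exp_mul_complex hc]
    have h1 : (2 * π * Complex.I * m) * ((1:ℝ)/2 : ℝ) = m * (π * Complex.I) := by
      push_cast; ring
    have h2 : (2 * π * Complex.I * m) * ((-(1:ℝ)/2 : ℝ)) = ((-m : ℤ) : ℂ) * (π * Complex.I) := by
      push_cast; ring
    rw [h1, h2, Complex.exp_int_mul, Complex.exp_int_mul]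
    have : Complex.exp (π * Complex.I) = -1 := by
      simpa using Complex.exp_pi_mul_I
    rw [this]
    have hsq : ((-1 : ℂ)) ^ m * ((-1:ℂ)) ^ (-m) = 1 := by
      rw [← zpow_add₀ (by norm_num : (-1:ℂ) ≠ 0)]; simp
    have : ((-1:ℂ)) ^ (-m) = ((-1:ℂ)) ^ m := by
      have h2 : ((-1:ℂ)) ^ m * ((-1:ℂ)) ^ m = 1 := by
        rw [← zpow_add₀ (by norm_num : (-1:ℂ) ≠ 0)]
        rw [show m + m = 2 * m by ring, zpow_mul]
        norm_num
      have := hsq.trans h2.symm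
      exact mul_left_cancel₀ (by
        intro h; apply (by norm_num : (-1:ℂ) ≠ 0); exact zpow_eq_zero_iff hm |>.mp h
        ) this.symm |>.symm
    rw [this]
    simp

lemma cube_measurable (d : ℕ) : MeasurableSet (cube d) :=
  MeasurableSet.univ_pi fun _ => measurableSet_Icc

lemma indicator_pi_prod {d : ℕ} (t : Set ℝ) (f : Fin d → ℝ → ℂ) (x : Fin d → ℝ) :
    (Set.univ.pi fun _ : Fin d => t).indicator (fun y => ∏ j, f j (y j)) x =
      ∏ j, t.indicator (f j) (x j) := by
  classical
  by_cases hx : x ∈ Set.univ.pi fun _ : Fin d => t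
  · rw [Set.indicator_of_mem hx]
    exact Finset.prod_congr rfl fun j _ => (Set.indicator_of_mem (hx j (Set.mem_univ j)) _).symm
  · rw [Set.indicator_of_notMem hx]
    rw [Set.mem_pi] at hx
    push_neg at hx
    obtain ⟨j, _, hj⟩ := hx
    exact (Finset.prod_eq_zero (Finset.mem_univ j) (by rw [Set.indicator_of_notMem hj])).symm

lemma eK_prod {d : ℕ} (k : Fin d → ℤ) (x : Fin d → ℝ) :
    eK k x = ∏ j, Complex.exp (2 * π * Complex.I * (k j) * (x j)) := by
  rw [eK, ← Complex.exp_sum]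
  congr 1
  push_cast
  rw [Finset.mul_sum]
  exact Finset.sum_congr rfl fun j _ => by ring

lemma integral_eK {d : ℕ} (k : Fin d → ℤ) :
    (∫ x in cube d, eK k x) = if k = 0 then 1 else 0 := by
  have h1 : (∫ x in cube d, eK k x)
      = ∏ j, ∫ t in Set.Icc (-(1:ℝ)/2) ((1:ℝ)/2), Complex.exp (2 * π * Complex.I * (k j) * t) := by
    rw [← MeasureTheory.integral_indicator (cube_measurable d)]
    have : ∀ x : Fin d → ℝ, (cube d).indicator (eK k) x
        = ∏ j, (Set.Icc (-(1:ℝ)/2) ((1:ℝ)/2)).indicator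
            (fun t => Complex.exp (2 * π * Complex.I * (k j) * t)) (x j) := by
      intro x
      rw [show (cube d).indicator (eK k) x
          = (cube d).indicator (fun y => ∏ j, Complex.exp (2 * π * Complex.I * (k j) * (y j))) x by
        unfold Set.indicator; split <;> simp [eK_prod]]
      exact indicator_pi_prod (Set.Icc (-(1:ℝ)/2) ((1:ℝ)/2)) (fun j t => Complex.exp (2 * π * Complex.I * (k j) * t)) x
    rw [MeasureTheory.integral_congr_ae (Filter.Eventually.of_forall this)]
    rw [MeasureTheory.volume_pi (α := fun _ : Fin d => ℝ), MeasureTheory.integral_fintype_prod_eq_prod (μ := fun _ => volume)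
      (f := fun j t => (Set.Icc (-(1:ℝ)/2) ((1:ℝ)/2)).indicator
        (fun s => Complex.exp (2 * π * Complex.I * (k j) * s)) t)]
    exact Finset.prod_congr rfl fun j _ =>
      (MeasureTheory.integral_indicator measurableSet_Icc)
  rw [h1]
  by_cases hk : k = 0
  · simp [hk, myint1d]; norm_num
  · have : ∃ j, k j ≠ 0 := by
      by_contra h; push_neg at h; exact hk (funext h)
    obtain ⟨j, hj⟩ := this
    rw [if_neg hk]
    refine Finset.prod_eq_zero (Finset.mem_univ j) ?_
    rw [myint1d, if_neg hj]

lemma eK_mul {d : ℕ} (k l : Fin d → ℤ) (x : Fin d → ℝ) :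
    eK k x * eK l x = eK (k + l) x := by
  rw [eK, eK, eK, ← Complex.exp_add]
  congr 1
  rw [← mul_add]
  congr 1
  rw [← Complex.ofReal_add]
  congr 1
  rw [← Finset.sum_add_distrib]
  exact Finset.sum_congr rfl fun j _ => by push_cast [Pi.add_apply]; ring

lemma eK_conj {d : ℕ} (k : Fin d → ℤ) (x : Fin d → ℝ) :
    (starRingEnd ℂ) (eK k x) = eK (-k) x := by
  rw [eK, eK, ← Complex.exp_conj]
  congr 1
  have hr : (∑ j, (((-k) j : ℤ) : ℝ) * x j) = -(∑ j, ((k j : ℝ)) * x j) := by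
    rw [← Finset.sum_neg_distrib]
    exact Finset.sum_congr rfl fun j _ => by simp [Pi.neg_apply]
  rw [hr]
  simp only [map_mul, Complex.conj_I, Complex.conj_ofReal, map_ofNat]
  push_cast
  ring

lemma norm_eK {d : ℕ} (k : Fin d → ℤ) (x : Fin d → ℝ) : ‖eK k x‖ = 1 := by
  rw [eK, show 2 * (π:ℂ) * Complex.I * ((∑ j, (k j : ℝ) * x j : ℝ) : ℂ)
      = ((2 * π * (∑ j, (k j : ℝ) * x j) : ℝ) : ℂ) * Complex.I by push_cast; ring]
  exact Complex.norm_exp_ofReal_mul_I _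

lemma eK_continuous {d : ℕ} (k : Fin d → ℤ) : Continuous (eK k) := by
  unfold eK
  fun_prop

lemma eK_zero {d : ℕ} (x : Fin d → ℝ) : eK (0 : Fin d → ℤ) x = 1 := by
  simp [eK]

noncomputable def Sf (d N : ℕ) : Finset (Fin d → ℤ) :=
  Fintype.piFinset fun _ => Finset.Icc (-(N:ℤ)) (N:ℤ)

lemma mem_Sf {d N : ℕ} {k : Fin d → ℤ} : k ∈ Sf d N ↔ ∀ j, |k j| ≤ (N:ℤ) := by
  simp [Sf, Fintype.mem_piFinset, Finset.mem_Icc, abs_le]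

lemma neg_mem_Sf {d N : ℕ} {k : Fin d → ℤ} (h : k ∈ Sf d N) : -k ∈ Sf d N := by
  rw [mem_Sf] at h ⊢
  intro j
  rw [Pi.neg_apply, abs_neg]
  exact h j

section
variable {d N : ℕ} {a : (Fin d → ℤ) → ℂ}

lemma fSum_eq_finsum (hsupp : ∀ k, ¬(∀ j, |k j| ≤ (N : ℤ)) → a k = 0) (x : Fin d → ℝ) :
    fSum a x = (∑ k ∈ Sf d N, a k * eK k x).re := by
  rw [fSum, tsum_eq_sum (s := Sf d N)]
  intro k hk
  rw [hsupp k (fun h => hk (mem_Sf.mpr h)), zero_mul]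

lemma cSum_real (hsupp : ∀ k, ¬(∀ j, |k j| ≤ (N : ℤ)) → a k = 0)
    (hreal : ∀ k, a (-k) = starRingEnd ℂ (a k)) (x : Fin d → ℝ) :
    ∑ k ∈ Sf d N, a k * eK k x = ((fSum a x : ℝ) : ℂ) := by
  have hconj : (starRingEnd ℂ) (∑ k ∈ Sf d N, a k * eK k x) = ∑ k ∈ Sf d N, a k * eK k x := by
    rw [map_sum]
    refine Finset.sum_equiv (Equiv.neg _) (fun k => ⟨fun h => neg_mem_Sf h,
      fun h => by simpa using neg_mem_Sf h⟩) fun k hk => ?_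
    rw [map_mul, eK_conj, ← hreal k]
    rfl
  rw [fSum_eq_finsum hsupp]
  exact ((Complex.conj_eq_iff_re).mp hconj).symm

lemma fSum_continuous (hsupp : ∀ k, ¬(∀ j, |k j| ≤ (N : ℤ)) → a k = 0) :
    Continuous (fSum a) := by
  have : fSum a = fun x => (∑ k ∈ Sf d N, a k * eK k x).re := funext (fSum_eq_finsum hsupp)
  rw [this]
  exact Complex.continuous_re.comp (continuous_finset_sum _ fun k _ =>
    (continuous_const.mul (eK_continuous k)))

lemma fSum_bound (hsupp : ∀ k, ¬(∀ j, |k j| ≤ (N : ℤ)) → a k = 0) (x : Fin d → ℝ) :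
    |fSum a x| ≤ ∑ k ∈ Sf d N, ‖a k‖ := by
  rw [fSum_eq_finsum hsupp]
  calc |(∑ k ∈ Sf d N, a k * eK k x).re| ≤ ‖∑ k ∈ Sf d N, a k * eK k x‖ :=
        Complex.abs_re_le_norm _
    _ ≤ ∑ k ∈ Sf d N, ‖a k * eK k x‖ := norm_sum_le _ _
    _ = ∑ k ∈ Sf d N, ‖a k‖ := Finset.sum_congr rfl fun k _ => by
        rw [norm_mul, norm_eK, mul_one]

end

lemma cube_compact (d : ℕ) : IsCompact (cube d) :=
  isCompact_univ_pi fun _ => isCompact_Icc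

lemma integrableOn_cube {d : ℕ} {E : Type*} [NormedAddCommGroup E]
    {f : (Fin d → ℝ) → E} (hf : Continuous f) : IntegrableOn f (cube d) :=
  hf.continuousOn.integrableOn_compact (cube_compact d)

section
variable {d N : ℕ}

/-- Pairing of a continuous function with a trig polynomial. -/
lemma integral_mul_cSum (g : (Fin d → ℝ) → ℂ) (hg : Continuous g) (q : (Fin d → ℤ) → ℂ) :
    (∫ x in cube d, g x * (∑ l ∈ Sf d N, q l * eK l x)) =
      ∑ l ∈ Sf d N, q l * ∫ x in cube d, g x * eK l x := by
  have h1 : ∀ x, g x * (∑ l ∈ Sf d N, q l * eK l x) = ∑ l ∈ Sf d N, q l * (g x * eK l x) := by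
    intro x
    rw [Finset.mul_sum]
    exact Finset.sum_congr rfl fun l _ => by ring
  simp_rw [h1]
  rw [MeasureTheory.integral_finset_sum]
  · exact Finset.sum_congr rfl fun l _ => MeasureTheory.integral_const_mul _ _
  · exact fun l _ => (integrableOn_cube (f := fun x => q l * g x * eK l x) ((continuous_const.mul hg).mul (eK_continuous l))).mono_measure le_rfl |>.congr (Filter.EventuallyEq.of_eq (funext fun x => by ring))

/-- Plancherel for products of two real trig polynomials. -/
lemma integral_fSum_mul {p q : (Fin d → ℤ) → ℂ}
    (hp : ∀ k, ¬(∀ j, |k j| ≤ (N : ℤ)) → p k = 0)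
    (hq : ∀ k, ¬(∀ j, |k j| ≤ (N : ℤ)) → q k = 0)
    (hpr : ∀ k, p (-k) = starRingEnd ℂ (p k))
    (hqr : ∀ k, q (-k) = starRingEnd ℂ (q k)) :
    ((∫ x in cube d, fSum p x * fSum q x : ℝ) : ℂ) = ∑ k ∈ Sf d N, p k * q (-k) := by
  rw [show ((∫ x in cube d, fSum p x * fSum q x : ℝ) : ℂ)
      = ∫ x in cube d, ((fSum p x * fSum q x : ℝ) : ℂ) from (integral_ofReal (𝕜 := ℂ)).symm]
  have h1 : ∀ x : Fin d → ℝ, ((fSum p x * fSum q x : ℝ) : ℂ)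
      = ∑ k ∈ Sf d N, ∑ l ∈ Sf d N, p k * q l * (eK k x * eK l x) := by
    intro x
    rw [Complex.ofReal_mul, ← cSum_real hp hpr, ← cSum_real hq hqr, Finset.sum_mul_sum]
    exact Finset.sum_congr rfl fun k _ => Finset.sum_congr rfl fun l _ => by ring
  simp_rw [h1]
  rw [MeasureTheory.integral_finset_sum _ (fun k _ => MeasureTheory.integrable_finset_sum _
    (fun l _ => integrableOn_cube (f := fun x => p k * q l * (eK k x * eK l x)) (continuous_const.mul
      ((eK_continuous k).mul (eK_continuous l)))))]
  refine Finset.sum_congr rfl fun k hk => ?_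
  rw [MeasureTheory.integral_finset_sum _
    (fun l _ => integrableOn_cube (f := fun x => p k * q l * (eK k x * eK l x)) (continuous_const.mul
      ((eK_continuous k).mul (eK_continuous l))))]
  have h2 : ∀ l ∈ Sf d N, (∫ x in cube d, p k * q l * (eK k x * eK l x))
      = p k * q l * (if k + l = 0 then 1 else 0) := by
    intro l _
    rw [MeasureTheory.integral_const_mul]
    congr 1
    simp_rw [eK_mul]
    exact integral_eK _
  rw [Finset.sum_congr rfl h2]
  rw [Finset.sum_eq_single_of_mem (-k) (neg_mem_Sf hk)]
  · rw [if_pos (by simp), mul_one]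
  · intro l _ hl
    rw [if_neg (fun h => hl (by linear_combination h - k)), mul_zero]
end

lemma mul_conj_self (z : ℂ) : z * starRingEnd ℂ z = ((‖z‖^2 : ℝ) : ℂ) := by
  rw [Complex.mul_conj]
  norm_cast
  rw [Complex.sq_norm]

lemma re_b_conj_sub (bb aa : ℂ) :
    (bb * starRingEnd ℂ (bb - aa)).re = (‖bb‖^2 - ‖aa‖^2 + ‖bb - aa‖^2)/2 := by
  have h : ∀ z : ℂ, ‖z‖^2 = z.re^2 + z.im^2 := fun z => by
    rw [Complex.sq_norm, Complex.normSq_apply]; ring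
  simp only [Complex.mul_re, Complex.conj_re, Complex.conj_im, Complex.sub_re,
    Complex.sub_im, h]
  ring

lemma scheme_step {τ ν lam : ℝ} (hτ : 0 < τ) (hlam : 0 < lam) (aa bb c : ℂ)
    (h : (bb - aa) / (τ:ℂ) = -((ν:ℂ) * ((lam^2 : ℝ):ℂ)) * bb - ((lam : ℝ):ℂ) * c) :
    ‖bb - aa‖^2/(τ*lam) + ν/2*lam*(‖bb‖^2 - ‖aa‖^2 + ‖bb - aa‖^2)
      + (c * starRingEnd ℂ (bb - aa)).re = 0 := by
  have hd : (bb - aa) * starRingEnd ℂ (bb - aa) = ((‖bb - aa‖^2 : ℝ) : ℂ) :=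
    mul_conj_self _
  have H : ((‖bb - aa‖^2/τ : ℝ) : ℂ)
      = ((-(ν*lam^2) : ℝ) : ℂ) * (bb * starRingEnd ℂ (bb - aa))
        + ((-lam : ℝ) : ℂ) * (c * starRingEnd ℂ (bb - aa)) := by
    push_cast at h hd ⊢
    linear_combination (starRingEnd ℂ (bb - aa)) * h - (1/(τ:ℂ)) * hd
  have hre := congrArg Complex.re H
  simp only [Complex.ofReal_re, Complex.add_re, Complex.re_ofReal_mul] at hre
  rw [re_b_conj_sub] at hre
  have hγ : (c * starRingEnd ℂ (bb - aa)).re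
      = -(‖bb - aa‖^2/(τ*lam)) - ν/2*lam*(‖bb‖^2 - ‖aa‖^2 + ‖bb - aa‖^2) := by
    field_simp at hre ⊢
    linarith [hre]
  rw [hγ]; ring

lemma taylor_bound (u v M : ℝ) (hu : u^2 ≤ M^2) (hv : v^2 ≤ M^2) :
    (v^2-1)^2/4 - (u^2-1)^2/4 - (u^3-u)*(v-u) ≤ (3/2*M^2 - 1/2)*(v-u)^2 := by
  nlinarith [mul_nonneg (sq_nonneg (v-u)) (sub_nonneg.mpr hv),
    mul_nonneg (sq_nonneg (v-u)) (sub_nonneg.mpr hu), sq_nonneg ((v-u)*(v-u))]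

lemma amgm_step {τ ν A B Q : ℝ} (hτ : 0 < τ) (hν : 0 < ν) (hA : 0 ≤ A) (hB : 0 ≤ B)
    (hQ : 0 ≤ Q) (hCS : Q^2 ≤ A*B) : Real.sqrt (2*ν/τ) * Q ≤ A/τ + ν/2*B := by
  have h1 : Q ≤ Real.sqrt (A*B) := Real.le_sqrt_of_sq_le hCS
  have h2 : Real.sqrt (2*ν/τ) * Real.sqrt (A*B) ≤ A/τ + ν/2*B := by
    rw [← Real.sqrt_mul (by positivity)]
    calc Real.sqrt (2*ν/τ*(A*B)) ≤ Real.sqrt ((A/τ + ν/2*B)^2) := by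
          apply Real.sqrt_le_sqrt
          rw [div_add' _ _ _ (by positivity), div_pow, div_mul_eq_mul_div,
            div_le_div_iff₀ (by positivity) (by positivity)]
          ring_nf
          nlinarith [sq_nonneg (A*2 - ν*B*τ), sq_nonneg τ, hτ.le]
      _ = A/τ + ν/2*B := Real.sqrt_sq (by positivity)
  calc Real.sqrt (2*ν/τ) * Q ≤ Real.sqrt (2*ν/τ) * Real.sqrt (A*B) :=
        mul_le_mul_of_nonneg_left h1 (Real.sqrt_nonneg _)
    _ ≤ A/τ + ν/2*B := h2

/-- discrete energy estimate for one step of the semi-implicit scheme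
`(u^{n+1}-u^n)/τ = -νΔ²u^{n+1} + ΔΠ_N f(u^n)`, `f(u)=u³-u`, for mean-zero
`u^n, u^{n+1} ∈ X_N` (represented on the Fourier side by coefficients `a`, `b`
supported in `|k|_∞ ≤ N`):
`ℰ(u^{n+1}) - ℰ(u^n) + (1/2 + √(2ν/τ))‖u^{n+1}-u^n‖₂²
  ≤ (3/2) max{‖u^n‖_∞², ‖u^{n+1}‖_∞²} ‖u^{n+1}-u^n‖₂²`. -/
theorem stmt12 (d : ℕ) (hd1 : 1 ≤ d) (hd : d ≤ 3) (N : ℕ) (hN : 2 ≤ N)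
    (ν τ : ℝ) (hν : 0 < ν) (hτ : 0 < τ)
    (a b : (Fin d → ℤ) → ℂ)
    (ha_supp : ∀ k, ¬(∀ j, |k j| ≤ (N : ℤ)) → a k = 0)
    (hb_supp : ∀ k, ¬(∀ j, |k j| ≤ (N : ℤ)) → b k = 0)
    (ha0 : a 0 = 0) (hb0 : b 0 = 0)
    (ha_real : ∀ k, a (-k) = starRingEnd ℂ (a k))
    (hb_real : ∀ k, b (-k) = starRingEnd ℂ (b k))
    (hscheme : ∀ k : Fin d → ℤ, (∀ j, |k j| ≤ (N : ℤ)) →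
      (b k - a k) / (τ : ℂ) =
        -((ν : ℂ) * ((2 * π * knorm k) ^ 4 : ℝ)) * b k -
          (((2 * π * knorm k) ^ 2 : ℝ) : ℂ) *
            ∫ x in cube d, (((fSum a x) ^ 3 - fSum a x : ℝ) : ℂ) * eK (-k) x) :
    energy d ν b - energy d ν a +
        (1 / 2 + Real.sqrt (2 * ν / τ)) * ∫ x in cube d, (fSum b x - fSum a x) ^ 2 ≤
      3 / 2 * (max (⨆ x : Fin d → ℝ, |fSum a x|) (⨆ x : Fin d → ℝ, |fSum b x|)) ^ 2 *
        ∫ x in cube d, (fSum b x - fSum a x) ^ 2 := by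
  classical
  set Ma := ⨆ x : Fin d → ℝ, |fSum a x| with hMadef
  set Mb := ⨆ x : Fin d → ℝ, |fSum b x| with hMbdef
  set M := max Ma Mb with hMdef
  set δ : (Fin d → ℤ) → ℂ := fun k => b k - a k with hδdef
  have hδ_supp : ∀ k, ¬(∀ j, |k j| ≤ (N : ℤ)) → δ k = 0 := fun k hk => by
    simp [hδdef, ha_supp k hk, hb_supp k hk]
  have hδ_real : ∀ k, δ (-k) = starRingEnd ℂ (δ k) := fun k => by
    simp only [hδdef, map_sub, ha_real k, hb_real k]
  have hδ0 : δ 0 = 0 := by simp [hδdef, ha0, hb0]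
  have hu_cont : Continuous (fSum a) := fSum_continuous (N := N) ha_supp
  have hv_cont : Continuous (fSum b) := fSum_continuous (N := N) hb_supp
  -- e = fSum δ
  have he : ∀ x, fSum b x - fSum a x = fSum δ x := by
    intro x
    rw [fSum_eq_finsum ha_supp (x := x), fSum_eq_finsum hb_supp (x := x),
      fSum_eq_finsum hδ_supp (x := x), ← Complex.sub_re]
    congr 1
    rw [← Finset.sum_sub_distrib]
    refine Finset.sum_congr rfl fun k _ => ?_
    simp only [hδdef]
    ring
  -- sup bounds
  have hbdda : BddAbove (Set.range fun x : Fin d → ℝ => |fSum a x|) := by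
    refine ⟨∑ k ∈ Sf d N, ‖a k‖, ?_⟩
    rintro y ⟨x, rfl⟩
    exact fSum_bound ha_supp x
  have hbddb : BddAbove (Set.range fun x : Fin d → ℝ => |fSum b x|) := by
    refine ⟨∑ k ∈ Sf d N, ‖b k‖, ?_⟩
    rintro y ⟨x, rfl⟩
    exact fSum_bound hb_supp x
  have hMa_b : ∀ x, |fSum a x| ≤ Ma := fun x => le_ciSup hbdda x
  have hMb_b : ∀ x, |fSum b x| ≤ Mb := fun x => le_ciSup hbddb x
  have hu2 : ∀ x, (fSum a x)^2 ≤ M^2 := fun x => by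
    have h1 : |fSum a x| ≤ M := (hMa_b x).trans (le_max_left Ma Mb)
    calc (fSum a x)^2 = |fSum a x|^2 := (sq_abs _).symm
      _ ≤ M^2 := pow_le_pow_left₀ (abs_nonneg _) h1 2
  have hv2 : ∀ x, (fSum b x)^2 ≤ M^2 := fun x => by
    have h1 : |fSum b x| ≤ M := (hMb_b x).trans (le_max_right Ma Mb)
    calc (fSum b x)^2 = |fSum b x|^2 := (sq_abs _).symm
      _ ≤ M^2 := pow_le_pow_left₀ (abs_nonneg _) h1 2
  -- lam positivity
  have hlam_pos : ∀ k ∈ (Sf d N).erase 0, (0:ℝ) < (2*π*knorm k)^2 := by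
    intro k hk
    have hk0 : k ≠ 0 := Finset.ne_of_mem_erase hk
    obtain ⟨j, hj⟩ : ∃ j, k j ≠ 0 := by
      by_contra h; push_neg at h; exact hk0 (funext h)
    have h1 : (0:ℝ) < ∑ j, ((k j : ℝ))^2 := by
      refine Finset.sum_pos' (fun j _ => sq_nonneg _) ⟨j, Finset.mem_univ j, ?_⟩
      have : ((k j : ℝ)) ≠ 0 := Int.cast_ne_zero.mpr hj
      positivity
    have h2 : (0:ℝ) < knorm k := by rw [knorm]; exact Real.sqrt_pos.mpr h1
    have h3 : (0:ℝ) < 2*π*knorm k := by positivity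
    exact pow_pos h3 2
  -- F1 : Plancherel for e
  have hF1 : (∫ x in cube d, (fSum b x - fSum a x)^2) = ∑ k ∈ Sf d N, ‖δ k‖^2 := by
    have h1 : ((∫ x in cube d, fSum δ x * fSum δ x : ℝ) : ℂ) = ∑ k ∈ Sf d N, δ k * δ (-k) :=
      integral_fSum_mul hδ_supp hδ_supp hδ_real hδ_real
    have h2 : (∑ k ∈ Sf d N, δ k * δ (-k)) = ((∑ k ∈ Sf d N, ‖δ k‖^2 : ℝ) : ℂ) := by
      rw [Complex.ofReal_sum]
      refine Finset.sum_congr rfl fun k _ => ?_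
      rw [hδ_real k, mul_conj_self]
    have h3 : (∫ x in cube d, (fSum b x - fSum a x)^2)
        = ∫ x in cube d, fSum δ x * fSum δ x := by
      refine MeasureTheory.integral_congr_ae (Filter.Eventually.of_forall fun x => ?_)
      show (fSum b x - fSum a x)^2 = fSum δ x * fSum δ x
      rw [he x, sq]
    exact Complex.ofReal_inj.mp (by rw [h3, h1, h2])
  -- energy unfolded
  have hEa : energy d ν a = ν/2 * (∑ k ∈ Sf d N, (2*π*knorm k)^2 * ‖a k‖^2)
      + 1/4 * ∫ x in cube d, ((fSum a x)^2 - 1)^2 := by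
    rw [energy, tsum_eq_sum (s := Sf d N) (fun k hk => by
      rw [ha_supp k (fun h => hk (mem_Sf.mpr h))]; simp)]
  have hEb : energy d ν b = ν/2 * (∑ k ∈ Sf d N, (2*π*knorm k)^2 * ‖b k‖^2)
      + 1/4 * ∫ x in cube d, ((fSum b x)^2 - 1)^2 := by
    rw [energy, tsum_eq_sum (s := Sf d N) (fun k hk => by
      rw [hb_supp k (fun h => hk (mem_Sf.mpr h))]; simp)]
  -- F4 : pairing of f(u) with e
  have hg_cont : Continuous (fun x => ((fSum a x^3 - fSum a x : ℝ) : ℂ)) :=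
    Complex.continuous_ofReal.comp ((hu_cont.pow 3).sub hu_cont)
  have hc : ((∫ x in cube d, (fSum a x^3 - fSum a x) * (fSum b x - fSum a x) : ℝ) : ℂ)
      = ∑ k ∈ Sf d N, (starRingEnd ℂ) (δ k) *
          ∫ x in cube d, ((fSum a x^3 - fSum a x : ℝ) : ℂ) * eK (-k) x := by
    have h1 := integral_mul_cSum (d := d) (N := N)
      (fun x => ((fSum a x^3 - fSum a x : ℝ) : ℂ)) hg_cont δ
    have h2 : (∫ x in cube d, ((fSum a x^3 - fSum a x : ℝ) : ℂ)
          * (∑ l ∈ Sf d N, δ l * eK l x))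
        = ((∫ x in cube d, (fSum a x^3 - fSum a x) * (fSum b x - fSum a x) : ℝ) : ℂ) := by
      rw [show ((∫ x in cube d, (fSum a x^3 - fSum a x) * (fSum b x - fSum a x) : ℝ) : ℂ)
          = ∫ x in cube d, (((fSum a x^3 - fSum a x) * (fSum b x - fSum a x) : ℝ) : ℂ)
          from (integral_ofReal (𝕜 := ℂ)).symm]
      refine MeasureTheory.integral_congr_ae (Filter.Eventually.of_forall fun x => ?_)
      show ((fSum a x^3 - fSum a x : ℝ) : ℂ) * (∑ l ∈ Sf d N, δ l * eK l x)
        = (((fSum a x^3 - fSum a x) * (fSum b x - fSum a x) : ℝ) : ℂ)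
      rw [cSum_real hδ_supp hδ_real x, he x]
      push_cast
      ring
    rw [h2] at h1
    rw [h1]
    refine Finset.sum_equiv (Equiv.neg _) (fun k => ⟨fun h => neg_mem_Sf h,
      fun h => by simpa using neg_mem_Sf h⟩) fun k hk => ?_
    have e1 : (starRingEnd ℂ) (δ (Equiv.neg _ k)) = δ k := by
      rw [show (Equiv.neg _ k) = -k from rfl, hδ_real k]
      exact Complex.conj_conj _
    rw [e1, show -(Equiv.neg _ k) = k from neg_neg k]
  have hΓ : (∑ k ∈ Sf d N, ((∫ x in cube d, ((fSum a x^3 - fSum a x : ℝ) : ℂ) * eK (-k) x)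
        * (starRingEnd ℂ) (δ k)).re)
      = ∫ x in cube d, (fSum a x^3 - fSum a x) * (fSum b x - fSum a x) := by
    have := congrArg Complex.re hc
    rw [Complex.ofReal_re, Complex.re_sum] at this
    rw [this]
    exact Finset.sum_congr rfl fun k _ => by rw [mul_comm]
  -- F5 : summed scheme identity
  have hsum : (∑ k ∈ (Sf d N).erase 0,
      (‖δ k‖^2/(τ*(2*π*knorm k)^2)
        + ν/2*(2*π*knorm k)^2*(‖b k‖^2 - ‖a k‖^2 + ‖δ k‖^2)
        + ((∫ x in cube d, ((fSum a x^3 - fSum a x : ℝ) : ℂ) * eK (-k) x)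
            * (starRingEnd ℂ) (δ k)).re)) = 0 := by
    refine Finset.sum_eq_zero fun k hk => ?_
    have hmem : ∀ j, |k j| ≤ (N : ℤ) := mem_Sf.mp (Finset.mem_of_mem_erase hk)
    have h := hscheme k hmem
    rw [show ((2*π*knorm k)^4) = ((2*π*knorm k)^2)^2 by ring] at h
    have hlam := hlam_pos k hk
    exact scheme_step hτ hlam (a k) (b k) _ h
  -- split hsum
  rw [Finset.sum_add_distrib, Finset.sum_add_distrib] at hsum
  have hsA : (∑ k ∈ (Sf d N).erase 0, ‖δ k‖^2/(τ*(2*π*knorm k)^2))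
      = (∑ k ∈ (Sf d N).erase 0, ‖δ k‖^2/((2*π*knorm k)^2))/τ := by
    rw [Finset.sum_div]
    refine Finset.sum_congr rfl fun k _ => ?_
    rw [div_div]
    ring_nf
  have hsB : (∑ k ∈ (Sf d N).erase 0, ν/2*(2*π*knorm k)^2*(‖b k‖^2 - ‖a k‖^2 + ‖δ k‖^2))
      = ν/2*((∑ k ∈ Sf d N, (2*π*knorm k)^2*‖b k‖^2)
          - (∑ k ∈ Sf d N, (2*π*knorm k)^2*‖a k‖^2)
          + ∑ k ∈ (Sf d N).erase 0, (2*π*knorm k)^2*‖δ k‖^2) := by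
    rw [show (∑ k ∈ Sf d N, (2*π*knorm k)^2*‖b k‖^2)
        = ∑ k ∈ (Sf d N).erase 0, (2*π*knorm k)^2*‖b k‖^2 from
      (Finset.sum_erase _ (by rw [hb0]; simp)).symm]
    rw [show (∑ k ∈ Sf d N, (2*π*knorm k)^2*‖a k‖^2)
        = ∑ k ∈ (Sf d N).erase 0, (2*π*knorm k)^2*‖a k‖^2 from
      (Finset.sum_erase _ (by rw [ha0]; simp)).symm]
    rw [← Finset.sum_sub_distrib, ← Finset.sum_add_distrib, Finset.mul_sum]
    exact Finset.sum_congr rfl fun k _ => by ring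
  have hΓ0 : (∑ k ∈ (Sf d N).erase 0,
      ((∫ x in cube d, ((fSum a x^3 - fSum a x : ℝ) : ℂ) * eK (-k) x)
        * (starRingEnd ℂ) (δ k)).re)
      = ∫ x in cube d, (fSum a x^3 - fSum a x) * (fSum b x - fSum a x) := by
    rw [Finset.sum_erase _ (by rw [hδ0]; simp)]
    exact hΓ
  rw [hsA, hsB, hΓ0] at hsum
  -- F3 : Taylor estimate, integrated
  have hint1 : IntegrableOn (fun x => ((fSum b x)^2-1)^2/4 - ((fSum a x)^2-1)^2/4
      - (fSum a x^3 - fSum a x)*(fSum b x - fSum a x)) (cube d) := by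
    apply integrableOn_cube
    fun_prop
  have hint2 : IntegrableOn (fun x => (3/2*M^2 - 1/2)*(fSum b x - fSum a x)^2) (cube d) := by
    apply integrableOn_cube
    fun_prop
  have hmono := MeasureTheory.setIntegral_mono_on hint1 hint2 (cube_measurable d)
    (fun x _ => taylor_bound (fSum a x) (fSum b x) M (hu2 x) (hv2 x))
  rw [MeasureTheory.integral_sub (by apply (integrableOn_cube (by fun_prop)).sub (integrableOn_cube (by fun_prop)))
      (integrableOn_cube (by fun_prop)),
    MeasureTheory.integral_sub (integrableOn_cube (by fun_prop)) (integrableOn_cube (by fun_prop)),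
    integral_div, integral_div, MeasureTheory.integral_const_mul] at hmono
  rw [hF1] at hmono
  -- F6 : Cauchy-Schwarz and AM-GM
  have hQ0 : (∑ k ∈ Sf d N, ‖δ k‖^2) = ∑ k ∈ (Sf d N).erase 0, ‖δ k‖^2 :=
    (Finset.sum_erase _ (by rw [hδ0]; simp)).symm
  have hA0 : (0:ℝ) ≤ ∑ k ∈ (Sf d N).erase 0, ‖δ k‖^2/((2*π*knorm k)^2) :=
    Finset.sum_nonneg fun k hk => div_nonneg (sq_nonneg _) (hlam_pos k hk).le
  have hB0 : (0:ℝ) ≤ ∑ k ∈ (Sf d N).erase 0, (2*π*knorm k)^2*‖δ k‖^2 :=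
    Finset.sum_nonneg fun k hk => mul_nonneg (hlam_pos k hk).le (sq_nonneg _)
  have hQnn : (0:ℝ) ≤ ∑ k ∈ (Sf d N).erase 0, ‖δ k‖^2 :=
    Finset.sum_nonneg fun k _ => sq_nonneg _
  have hCS : (∑ k ∈ (Sf d N).erase 0, ‖δ k‖^2)^2
      ≤ (∑ k ∈ (Sf d N).erase 0, ‖δ k‖^2/((2*π*knorm k)^2))
        * ∑ k ∈ (Sf d N).erase 0, (2*π*knorm k)^2*‖δ k‖^2 := by
    have h := Finset.sum_mul_sq_le_sq_mul_sq ((Sf d N).erase 0)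
      (fun k => ‖δ k‖/(2*π*knorm k)) (fun k => (2*π*knorm k)*‖δ k‖)
    have e1 : (∑ k ∈ (Sf d N).erase 0, (‖δ k‖/(2*π*knorm k)) * ((2*π*knorm k)*‖δ k‖))
        = ∑ k ∈ (Sf d N).erase 0, ‖δ k‖^2 := by
      refine Finset.sum_congr rfl fun k hk => ?_
      have hne : (2*π*knorm k) ≠ 0 := fun h0 => by
        simpa [h0] using hlam_pos k hk
      have hne' : knorm k ≠ 0 := fun h0 => hne (by rw [h0, mul_zero])
      field_simp
    have e2 : (∑ k ∈ (Sf d N).erase 0, (‖δ k‖/(2*π*knorm k))^2)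
        = ∑ k ∈ (Sf d N).erase 0, ‖δ k‖^2/((2*π*knorm k)^2) :=
      Finset.sum_congr rfl fun k _ => by rw [div_pow]
    have e3 : (∑ k ∈ (Sf d N).erase 0, ((2*π*knorm k)*‖δ k‖)^2)
        = ∑ k ∈ (Sf d N).erase 0, (2*π*knorm k)^2*‖δ k‖^2 :=
      Finset.sum_congr rfl fun k _ => by rw [mul_pow]
    rw [e1, e2, e3] at h
    exact h
  have hAM := amgm_step hτ hν hA0 hB0 hQnn hCS
  -- final assembly
  rw [hEa, hEb, hF1, hQ0]
  rw [hQ0] at hmono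
  linarith [hsum, hmono, hAM]
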